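/- For every integer $k$, $S_k(t)^3 - 3 S_k(t) S_{k-1}(t)^2 + t\, S_{k-1}(t)^3 = S_{3k}(t)$ as polynomials. -/

import Mathlib

open Polynomial

theorem stmt_8 (S : ℤ → Polynomial ℂ) (hS0 : S 0 = 1) (hS1 : S 1 = Polynomial.X)
    (hS : ∀ k : ℤ, S (k + 1) = Polynomial.X * S k - S (k - 1)) :
    ∀ k : ℤ, (S k) ^ 3 - 3 * S k * (S (k - 1)) ^ 2 + Polynomial.X * (S (k - 1)) ^ 3
      = S (3 * k) := by
  have hneg : S (-1) = 0 := by
    have h0 := hS 0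
    rw [show (0:ℤ)+1 = 1 by norm_num, show (0:ℤ)-1 = -1 by norm_num, hS0, hS1, mul_one] at h0
    linear_combination h0
  have key : ∀ m : ℤ, (∀ n : ℤ, S (n + m) = S n * S m - S (n-1) * S (m-1)) ∧
      (∀ n : ℤ, S (n + (m+1)) = S n * S (m+1) - S (n-1) * S (m+1-1)) := by
    intro m
    induction m using Int.induction_on with
    | zero =>
      constructor
      · intro n
        rw [show (0:ℤ)-1 = -1 by norm_num, add_zero, hS0, hneg, mul_one, mul_zero, sub_zero]
      · intro n
        rw [show (0:ℤ)+1 = 1 by norm_num, show (1:ℤ)-1 = 0 by norm_num, hS1, hS0, mul_one]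
        linear_combination hS n
    | succ i ih =>
      constructor
      · intro n
        have h := ih.2 n
        rw [show ((i:ℤ)+1-1) = (i:ℤ) by ring] at h
        rw [show ((i:ℤ)+1-1) = (i:ℤ) by ring]
        exact h
      · intro n
        have h1 := ih.1 n
        have h2 := ih.2 n
        rw [show ((i:ℤ)+1-1) = (i:ℤ) by ring] at h2
        rw [show ((i:ℤ)+1+1-1) = ((i:ℤ)+1) by ring,
            show (n + ((i:ℤ)+1+1)) = (n + ((i:ℤ)+1)) + 1 by ring]
        have hr := hS (n + ((i:ℤ)+1))
        rw [show (n + ((i:ℤ)+1) - 1) = n + (i:ℤ) by ring] at hr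
        have hm := hS ((i:ℤ)+1)
        rw [show ((i:ℤ)+1-1) = (i:ℤ) by ring] at hm
        rw [hr, hm]
        linear_combination Polynomial.X * h2 - h1 + S (n-1) * hS i
    | pred i ih =>
      constructor
      · intro n
        have h1 := ih.1 n
        have h2 := ih.2 n
        rw [show (-(i:ℤ)+1-1) = -(i:ℤ) by ring] at h2
        have hb := hS (n + -(i:ℤ))
        rw [show (n + -(i:ℤ) + 1) = n + (-(i:ℤ)+1) by ring,
            show (n + -(i:ℤ) - 1) = n + (-(i:ℤ)-1) by ring] at hb
        have hm1 := hS (-(i:ℤ))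
        have hm2 := hS (-(i:ℤ)-1)
        rw [show (-(i:ℤ)-1+1) = -(i:ℤ) by ring] at hm2
        linear_combination hb + Polynomial.X * h1 - h2 - S n * hm1 + S (n-1) * hm2
      · intro n
        have h := ih.1 n
        rw [show (-(i:ℤ)-1+1) = -(i:ℤ) by ring]
        exact h
  intro k
  have h2 := (key k).1 k
  have h2' := (key (k-1)).1 k
  have h3 := (key (k+k)).1 k
  rw [show (k+(k+k)) = 3*k by ring, show (k+k-1) = k+(k-1) by ring] at h3
  have hr := hS (k-1)
  rw [show (k-1+1) = k by ring] at hr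
  linear_combination -h3 - S k * h2 + S (k-1) * h2' - S (k-1)^2 * hr
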